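/- Let A be an n×n real symmetric positive definite matrix and let M₁ be an n×n real symmetric positive definite matrix with M₁A = AM₁. Let g₀ ∈ ℝⁿ with g₀ ≠ 0, let α₀ ∈ ℝ be arbitrary (in the paper α₀ is the stepsize α_{k-1}(Ψ(A)) generated from a possibly different function Ψ), and set g₁ = (I − α₀A)g₀, α₁ = ⟨g₀, M₁ g₀⟩/⟨g₀, M₁ A g₀⟩, and g₂ = (I − α₁A)g₁. If q ∈ ℝⁿ satisfies (I − α₀A)q = g₀, then ⟨q, M₁ g₂⟩ = 0. -/

import Mathlib

open Matrix
open scoped MatrixOrder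

private lemma dot_symm_move {n : ℕ} (M : Matrix (Fin n) (Fin n) ℝ) (hM : Mᵀ = M)
    (v w : Fin n → ℝ) : v ⬝ᵥ (M *ᵥ w) = (M *ᵥ v) ⬝ᵥ w := by
  rw [Matrix.dotProduct_mulVec, ← Matrix.mulVec_transpose, hM]

private lemma commute_sqrt {n : ℕ} {A M : Matrix (Fin n) (Fin n) ℝ} (hA : A.PosSemidef)
    (h : M * A = A * M) : M * CFC.sqrt A = CFC.sqrt A * M := by
  have hc : Commute A M := h.symm
  have := hc.cfc_nnreal NNReal.sqrt
  rw [← CFC.sqrt_eq_cfc] at this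
  exact this.eq.symm

private lemma dot_MA_pos {n : ℕ} {A M₁ : Matrix (Fin n) (Fin n) ℝ}
    (hA : A.PosDef) (hM₁ : M₁.PosDef) (hcomm : M₁ * A = A * M₁)
    {x : Fin n → ℝ} (hx : x ≠ 0) : 0 < x ⬝ᵥ (M₁ *ᵥ (A *ᵥ x)) := by
  set S := CFC.sqrt A with hS
  have hS2 : S * S = A := CFC.sqrt_mul_sqrt_self A hA.posSemidef.nonneg
  have hSsym : Sᵀ = S := by
    have := (CFC.sqrt_nonneg A).posSemidef.1
    simpa [Matrix.IsHermitian, Matrix.conjTranspose_eq_transpose_of_trivial] using this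
  have hMS : M₁ * S = S * M₁ := commute_sqrt hA.posSemidef hcomm
  have hSx : S *ᵥ x ≠ 0 := by
    intro h0
    have hAx : A *ᵥ x = 0 := by
      rw [← hS2, ← Matrix.mulVec_mulVec, h0, Matrix.mulVec_zero]
    have := hA.dotProduct_mulVec_pos hx
    rw [hAx] at this
    simp at this
  have key : x ⬝ᵥ (M₁ *ᵥ (A *ᵥ x)) = (S *ᵥ x) ⬝ᵥ (M₁ *ᵥ (S *ᵥ x)) := by
    calc x ⬝ᵥ (M₁ *ᵥ (A *ᵥ x)) = x ⬝ᵥ ((M₁ * A) *ᵥ x) := by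
          rw [Matrix.mulVec_mulVec]
      _ = x ⬝ᵥ ((S * (M₁ * S)) *ᵥ x) := by
          rw [show S * (M₁ * S) = M₁ * A by rw [← hS2, ← mul_assoc, ← hMS, mul_assoc]]
      _ = x ⬝ᵥ (S *ᵥ ((M₁ * S) *ᵥ x)) := by rw [Matrix.mulVec_mulVec]
      _ = (S *ᵥ x) ⬝ᵥ ((M₁ * S) *ᵥ x) := dot_symm_move S hSsym _ _
      _ = (S *ᵥ x) ⬝ᵥ (M₁ *ᵥ (S *ᵥ x)) := by rw [← Matrix.mulVec_mulVec]
  rw [key]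
  have := hM₁.dotProduct_mulVec_pos hSx
  simpa using this

/-- Lemma 2 (generalized orthogonal property): the step `α₀` producing `g₁`
may come from a different function `Ψ`; the orthogonality `⟨q, M₁ g₂⟩ = 0`
still holds where `α₁` is the (glstep1) stepsize built from `M₁`. -/
theorem generalized_orthogonal_property {n : ℕ} (A M₁ : Matrix (Fin n) (Fin n) ℝ)
    (hA : A.PosDef) (hM₁ : M₁.PosDef) (hcomm : M₁ * A = A * M₁)
    (g₀ : Fin n → ℝ) (hg₀ : g₀ ≠ 0) (α₀ : ℝ)
    (g₁ : Fin n → ℝ) (hg₁ : g₁ = g₀ - α₀ • (A *ᵥ g₀))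
    (α₁ : ℝ) (hα₁ : α₁ = (g₀ ⬝ᵥ (M₁ *ᵥ g₀)) / (g₀ ⬝ᵥ (M₁ *ᵥ (A *ᵥ g₀))))
    (g₂ : Fin n → ℝ) (hg₂ : g₂ = g₁ - α₁ • (A *ᵥ g₁))
    (q : Fin n → ℝ) (hq : q - α₀ • (A *ᵥ q) = g₀) :
    q ⬝ᵥ (M₁ *ᵥ g₂) = 0 := by
  have hAsym : Aᵀ = A := by
    have := hA.1
    simpa [Matrix.IsHermitian, Matrix.conjTranspose_eq_transpose_of_trivial] using this
  have hMsym : M₁ᵀ = M₁ := by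
    have := hM₁.1
    simpa [Matrix.IsHermitian, Matrix.conjTranspose_eq_transpose_of_trivial] using this
  set z : Fin n → ℝ := g₀ - α₁ • (A *ᵥ g₀) with hz
  have hg₂' : g₂ = z - α₀ • (A *ᵥ z) := by
    rw [hg₂, hg₁, hz]
    simp only [Matrix.mulVec_sub, Matrix.mulVec_smul]
    module
  -- the matrix B = 1 - α₀ • A
  set B : Matrix (Fin n) (Fin n) ℝ := 1 - α₀ • A with hB
  have hBv : ∀ v : Fin n → ℝ, B *ᵥ v = v - α₀ • (A *ᵥ v) := by
    intro v
    rw [hB, Matrix.sub_mulVec, Matrix.one_mulVec, Matrix.smul_mulVec]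
  have hMBsym : (M₁ * B)ᵀ = M₁ * B := by
    have hBsym : Bᵀ = B := by
      rw [hB]; simp [Matrix.transpose_smul, hAsym]
    have hBM : B * M₁ = M₁ * B := by
      rw [hB]
      simp only [sub_mul, mul_sub, one_mul, mul_one, Matrix.smul_mul, Matrix.mul_smul, hcomm]
    rw [Matrix.transpose_mul, hBsym, hMsym, hBM]
  have key : q ⬝ᵥ (M₁ *ᵥ g₂) = g₀ ⬝ᵥ (M₁ *ᵥ z) := by
    calc q ⬝ᵥ (M₁ *ᵥ g₂) = q ⬝ᵥ (M₁ *ᵥ (B *ᵥ z)) := by rw [hg₂', hBv]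
      _ = q ⬝ᵥ ((M₁ * B) *ᵥ z) := by rw [Matrix.mulVec_mulVec]
      _ = ((M₁ * B) *ᵥ q) ⬝ᵥ z := dot_symm_move _ hMBsym _ _
      _ = (M₁ *ᵥ (B *ᵥ q)) ⬝ᵥ z := by rw [← Matrix.mulVec_mulVec]
      _ = (M₁ *ᵥ g₀) ⬝ᵥ z := by rw [hBv, hq]
      _ = g₀ ⬝ᵥ (M₁ *ᵥ z) := (dot_symm_move M₁ hMsym _ _).symm
  rw [key, hz]
  have hD : 0 < g₀ ⬝ᵥ (M₁ *ᵥ (A *ᵥ g₀)) := dot_MA_pos hA hM₁ hcomm hg₀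
  rw [Matrix.mulVec_sub, Matrix.mulVec_smul, dotProduct_sub, dotProduct_smul,
    hα₁, smul_eq_mul, div_mul_cancel₀ _ hD.ne', sub_self]
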